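/- Fix n ≥ 1 and 1 ≤ r ≤ n. The sum, over all compositions c = (c_1,…,c_k) of n, of the r-th part c_r (taken to be 0 when k < r) equals ∑_{i=r}^{n} C(n,i), where C(n,i) is the binomial coefficient. Equivalently, the probability that a uniformly random one of the n elements of a uniformly random composition of n has rank r is (1/(n·2^{n−1})) ∑_{i=r}^{n} C(n,i). -/

import Mathlib

open Finset Nat

/-- Splitting a composition of `n ≥ 1` by its first block. -/
lemma composition_split_sum (n : ℕ) (hn : 1 ≤ n) (f : List ℕ → ℕ) :
    ∑ c : Composition n, f c.blocks
      = f [n] + ∑ a ∈ Finset.Icc 1 (n - 1), ∑ c : Composition (n - a), f (a :: c.blocks) := by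
  classical
  set e : (Unit ⊕ ((a : ↥(Finset.Icc 1 (n - 1))) × Composition (n - (a : ℕ)))) → Composition n :=
    fun x => match x with
    | .inl _ => ⟨[n], by rintro i hi; simp at hi; omega, by simp⟩
    | .inr ⟨⟨a, ha⟩, c⟩ =>
        ⟨a :: c.blocks, by
          rintro i hi
          rcases List.mem_cons.1 hi with h | h
          · subst h; exact (Finset.mem_Icc.1 ha).1
          · exact c.blocks_pos h, by
          simp only [List.sum_cons, c.blocks_sum]
          have := Finset.mem_Icc.1 ha
          omega⟩ with he
  have hbij : Function.Bijective e := by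
    constructor
    · rintro (⟨⟩ | ⟨⟨a, ha⟩, c⟩) (⟨⟩ | ⟨⟨b, hb⟩, d⟩) h
      · rfl
      · exfalso
        simp [he, Composition.ext_iff] at h
        have hb' := Finset.mem_Icc.1 hb
        obtain ⟨h1, h2⟩ := h
        omega
      · exfalso
        simp [he, Composition.ext_iff] at h
        have hb' := Finset.mem_Icc.1 ha
        obtain ⟨h1, h2⟩ := h
        omega
      · simp [he, Composition.ext_iff] at h
        obtain ⟨h1, h2⟩ := h
        subst h1
        have : c = d := Composition.ext h2
        rw [this]
    · intro c
      rcases hc : c.blocks with _ | ⟨b, t⟩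
      · exfalso; have := c.blocks_sum; rw [hc] at this; simp at this; omega
      rcases ht : t with _ | ⟨x, s⟩
      · refine ⟨.inl (), ?_⟩
        have := c.blocks_sum
        rw [hc, ht] at this
        simp at this
        apply Composition.ext
        simp [he, hc, ht, this]
      · -- t nonempty
        rw [ht] at hc
        have hbpos : 0 < b := c.blocks_pos (by rw [hc]; exact List.mem_cons_self)
        have htsum : b + (x + s.sum) = n := by
          have := c.blocks_sum; rw [hc] at this; simp at this; omega
        have hxpos : 0 < x := c.blocks_pos (by rw [hc]; simp)
        have hb : b ∈ Finset.Icc 1 (n - 1) := by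
          rw [Finset.mem_Icc]; omega
        refine ⟨.inr ⟨⟨b, hb⟩, ⟨x :: s, ?_, ?_⟩⟩, ?_⟩
        · intro i hi
          exact c.blocks_pos (by rw [hc]; exact List.mem_cons_of_mem _ hi)
        · simp only [List.sum_cons]; omega
        · apply Composition.ext; simp [he, hc]
  rw [← Fintype.sum_bijective e hbij _ (fun c => f c.blocks) (fun x => rfl)]
  rw [Fintype.sum_sum_type]
  congr 1
  · rw [← Finset.univ_sigma_univ, Finset.sum_sigma]
    exact Finset.sum_coe_sort (Finset.Icc 1 (n-1)) (fun a => ∑ c : Composition (n - a), f (a :: c.blocks))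

/-- Geometric-type sum: `∑_{a=1}^{n-1} a·2^{n-1-a} = 2^n - n - 1` (stated additively). -/
lemma geom_aux : ∀ n : ℕ, 1 ≤ n → n + (∑ a ∈ Finset.Icc 1 (n - 1), a * 2 ^ (n - 1 - a)) + 1 = 2 ^ n := by
  intro n
  induction n with
  | zero => omega
  | succ n ih =>
    intro _
    rcases Nat.eq_zero_or_pos n with h | h
    · subst h; simp
    have hT : (∑ a ∈ Finset.Icc 1 (n + 1 - 1), a * 2 ^ (n + 1 - 1 - a))
        = n + 2 * ∑ a ∈ Finset.Icc 1 (n - 1), a * 2 ^ (n - 1 - a) := by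
      have hn1 : n + 1 - 1 = (n - 1) + 1 := by omega
      rw [hn1, Finset.sum_Icc_succ_top (by omega)]
      have : ∀ a ∈ Finset.Icc 1 (n - 1), a * 2 ^ ((n - 1) + 1 - a) = 2 * (a * 2 ^ (n - 1 - a)) := by
        intro a ha
        have ha' := Finset.mem_Icc.1 ha
        have : (n - 1) + 1 - a = (n - 1 - a) + 1 := by omega
        rw [this, pow_succ]
        ring
      rw [Finset.sum_congr rfl this, ← Finset.mul_sum]
      have : n - 1 + 1 = n := by omega
      rw [this]
      have hnn : n - n = 0 := by omega
      rw [hnn]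
      ring_nf
    rw [hT]
    have := ih h
    have h2 : 2 ^ (n + 1) = 2 * 2 ^ n := by rw [pow_succ]; ring
    omega

lemma rank_count_zero_of_lt {m r : ℕ} (hm : m < r) (c : Composition m) :
    c.blocks.getD (r - 1) 0 = 0 := by
  apply List.getD_eq_default
  have := c.length_le
  simp only [Composition.length] at this
  omega

lemma main_aux : ∀ n : ℕ, 1 ≤ n → ∀ r : ℕ, 1 ≤ r →
    ∑ c : Composition n, c.blocks.getD (r - 1) 0 = ∑ i ∈ Finset.Icc r n, n.choose i := by
  intro n
  induction n using Nat.strong_induction_on with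
  | _ n IH =>
    intro hn r hr
    rcases Nat.lt_or_ge n r with hnr | hnr
    · -- n < r : both sides are 0
      rw [Finset.Icc_eq_empty (by omega), Finset.sum_empty]
      rw [Finset.sum_congr rfl (fun c _ => rank_count_zero_of_lt hnr c)]
      simp
    rcases eq_or_lt_of_le hr with hr1 | hr2
    · -- r = 1
      subst hr1
      rw [composition_split_sum n hn (fun l => l.getD 0 0)]
      have h1 : ∀ a ∈ Finset.Icc 1 (n - 1),
          (∑ c : Composition (n - a), (a :: c.blocks).getD 0 0) = a * 2 ^ (n - 1 - a) := by
        intro a ha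
        have ha' := Finset.mem_Icc.1 ha
        simp only [List.getD_cons_zero]
        rw [Finset.sum_const, Finset.card_univ, composition_card, smul_eq_mul]
        rw [show n - a - 1 = n - 1 - a by omega]
        ring
      rw [Finset.sum_congr rfl h1]
      simp only [List.getD_cons_zero]
      have hrhs : (∑ i ∈ Finset.Icc 1 n, n.choose i) + 1 = 2 ^ n := by
        have := Nat.sum_range_choose n
        rw [Finset.range_eq_Ico, Finset.sum_eq_sum_Ico_succ_bot (by omega),
            Finset.Ico_add_one_right_eq_Icc] at this
        simp at this
        omega
      have := geom_aux n hn
      omega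
    · -- r ≥ 2
      obtain ⟨s, rfl⟩ : ∃ s, r = s + 1 := ⟨r - 1, by omega⟩
      have hs : 1 ≤ s := by omega
      rw [composition_split_sum n hn (fun l => l.getD (s + 1 - 1) 0)]
      have h0 : ([n] : List ℕ).getD (s + 1 - 1) 0 = 0 := by
        apply List.getD_eq_default; simp; omega
      rw [h0, zero_add]
      have h1 : ∀ a ∈ Finset.Icc 1 (n - 1),
          (∑ c : Composition (n - a), (a :: c.blocks).getD (s + 1 - 1) 0)
            = ∑ i ∈ Finset.Icc s (n - a), (n - a).choose i := by
        intro a ha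
        have ha' := Finset.mem_Icc.1 ha
        have hstep : ∀ c : Composition (n - a),
            (a :: c.blocks).getD (s + 1 - 1) 0 = c.blocks.getD (s - 1) 0 := by
          intro c
          have : s + 1 - 1 = (s - 1) + 1 := by omega
          rw [this, List.getD_cons_succ]
        rw [Finset.sum_congr rfl (fun c _ => hstep c)]
        exact IH (n - a) (by omega) (by omega) s hs
      rw [Finset.sum_congr rfl h1]
      -- reindex a ↦ n - a
      have h2 : (∑ a ∈ Finset.Icc 1 (n - 1), ∑ i ∈ Finset.Icc s (n - a), (n - a).choose i)
          = ∑ m ∈ Finset.Icc 1 (n - 1), ∑ i ∈ Finset.Icc s m, m.choose i := by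
        refine Finset.sum_nbij' (i := fun a => n - a) (j := fun m => n - m) ?_ ?_ ?_ ?_ ?_
        · intro a ha; have := Finset.mem_Icc.1 ha; rw [Finset.mem_Icc]; omega
        · intro m hm; have := Finset.mem_Icc.1 hm; rw [Finset.mem_Icc]; omega
        · intro a ha; have := Finset.mem_Icc.1 ha; omega
        · intro m hm; have := Finset.mem_Icc.1 hm; omega
        · intro a ha; rfl
      rw [h2]
      -- extend inner sums, swap, contract, hockey stick
      have h3 : ∀ m ∈ Finset.Icc 1 (n - 1),
          (∑ i ∈ Finset.Icc s m, m.choose i) = ∑ i ∈ Finset.Icc s (n - 1), m.choose i := by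
        intro m hm
        have hm' := Finset.mem_Icc.1 hm
        apply Finset.sum_subset
        · apply Finset.Icc_subset_Icc_right; omega
        · intro i hi hni
          rw [Finset.mem_Icc] at hi
          apply Nat.choose_eq_zero_of_lt
          rw [Finset.mem_Icc] at hni
          omega
      rw [Finset.sum_congr rfl h3, Finset.sum_comm]
      have h4 : ∀ i ∈ Finset.Icc s (n - 1),
          (∑ m ∈ Finset.Icc 1 (n - 1), m.choose i) = n.choose (i + 1) := by
        intro i hi
        have hi' := Finset.mem_Icc.1 hi
        have : (∑ m ∈ Finset.Icc 1 (n - 1), m.choose i) = ∑ m ∈ Finset.Icc i (n - 1), m.choose i := by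
          symm
          apply Finset.sum_subset
          · apply Finset.Icc_subset_Icc_left; omega
          · intro m hm hnm
            rw [Finset.mem_Icc] at hm hnm
            apply Nat.choose_eq_zero_of_lt
            omega
        rw [this, Nat.sum_Icc_choose]
        congr 1
        omega
      rw [Finset.sum_congr rfl h4]
      -- reindex i ↦ i + 1
      have hmap : Finset.Icc (s + 1) n = (Finset.Icc s (n - 1)).map (addRightEmbedding 1) := by
        rw [Finset.map_add_right_Icc]
        congr 1
        omega
      rw [hmap, Finset.sum_map]
      rfl

/-- **Rank distribution in a random composition (unlabeled case).** For `1 ≤ r ≤ n`, the sum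
over all compositions `c = (c_1,…,c_k)` of `n` of the `r`-th part `c_r` (taken to be `0` when
`k < r`; parts are indexed from `1`, so `c_r` is entry `r−1` of the list of blocks) equals
`∑_{i=r}^{n} C(n,i)`.  Equivalently, the probability that a uniformly random one of the `n`
elements of a uniformly random composition of `n` has rank `r` is
`(1/(n·2^{n−1}))·∑_{i=r}^{n} C(n,i)`. -/
theorem rank_count_unlabeled (n r : ℕ) (hr : 1 ≤ r) (hrn : r ≤ n) :
    ∑ c : Composition n, c.blocks.getD (r - 1) 0 = ∑ i ∈ Finset.Icc r n, n.choose i :=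
  main_aux n (le_trans hr hrn) r hr
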